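/- Let V be a ℚ-vector space with a symmetric bilinear form ⟨·,·⟩, and let E₁ⁱ, E₂ⁱ (i ∈ Fin 10), C, F, ξ be vectors in V such that the family consisting of all E₁ⁱ, E₂ⁱ together with C and F is a basis of V, and the following hold: ⟨E₁ⁱ,E₁ⁱ⟩ = ⟨E₂ⁱ,E₂ⁱ⟩ = −2 and ⟨E₁ⁱ,E₂ⁱ⟩ = 1 for all i, while E-vectors belonging to distinct indices i are orthogonal; ⟨F,F⟩ = 0; ⟨F,E₁ⁱ⟩ = ⟨F,E₂ⁱ⟩ = 0 for all i; ⟨F,C⟩ = 3; ⟨ξ,F⟩ = 3; ⟨C,C⟩ = 0; ⟨C,E₁ⁱ⟩ = 1 for all i ∈ Fin 10; ⟨C,E₂ⁱ⟩ = 0 for i = 1,…,6 and ⟨C,E₂ⁱ⟩ = 1 for i = 7,…,10; ⟨ξ,E₁ⁱ⟩ = ⟨ξ,E₂ⁱ⟩ = 1 for all i; ⟨ξ,ξ⟩ = −2. Then ξ = −(1/3)•Σ_{i=1}^{6}(E₁ⁱ + 2•E₂ⁱ) + C + F; in particular Σ_{i=1}^{6}(E₁ⁱ + 2•E₂ⁱ)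 = 3•(C + F − ξ). -/

import Mathlib

/-- Theorem 9.11 of the paper: expression of the curve of cusps `ξ` of a quasi-elliptic
K3 surface with 10 fibers of type IV in terms of the fibre components, a trisection `C`
of arithmetic genus 1 and the fiber class `F`; in particular `∑_{i=1}^{6} (E₁ⁱ + 2E₂ⁱ)`
is divisible by 3. -/
theorem stmt3 (V : Type*) [AddCommGroup V] [Module ℚ V]
    (B : V →ₗ[ℚ] V →ₗ[ℚ] ℚ)
    (hsymm : ∀ x y, B x y = B y x)
    (E₁ E₂ : Fin 10 → V) (C F ξ : V)
    (hindep : LinearIndependent ℚ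
      (Sum.elim (Sum.elim E₁ E₂)
        (Sum.elim (fun _ : Unit => C) (fun _ : Unit => F))))
    (hspan : Submodule.span ℚ (Set.range
      (Sum.elim (Sum.elim E₁ E₂)
        (Sum.elim (fun _ : Unit => C) (fun _ : Unit => F)))) = ⊤)
    (hE₁E₁ : ∀ i, B (E₁ i) (E₁ i) = -2)
    (hE₂E₂ : ∀ i, B (E₂ i) (E₂ i) = -2)
    (hE₁E₂ : ∀ i, B (E₁ i) (E₂ i) = 1)
    (hE₁E₁' : ∀ i j, i ≠ j → B (E₁ i) (E₁ j) = 0)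
    (hE₂E₂' : ∀ i j, i ≠ j → B (E₂ i) (E₂ j) = 0)
    (hE₁E₂' : ∀ i j, i ≠ j → B (E₁ i) (E₂ j) = 0)
    (hFF : B F F = 0)
    (hFE₁ : ∀ i, B F (E₁ i) = 0)
    (hFE₂ : ∀ i, B F (E₂ i) = 0)
    (hFC : B F C = 3)
    (hξF : B ξ F = 3)
    (hCC : B C C = 0)
    (hCE₁ : ∀ i, B C (E₁ i) = 1)
    (hCE₂lo : ∀ i : Fin 10, (i : ℕ) < 6 → B C (E₂ i) = 0)
    (hCE₂hi : ∀ i : Fin 10, 6 ≤ (i : ℕ) → B C (E₂ i) = 1)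
    (hξE₁ : ∀ i, B ξ (E₁ i) = 1)
    (hξE₂ : ∀ i, B ξ (E₂ i) = 1)
    (hξξ : B ξ ξ = -2) :
    ξ = -((1 : ℚ) / 3) •
        (∑ i ∈ Finset.univ.filter (fun i : Fin 10 => (i : ℕ) < 6), (E₁ i + 2 • E₂ i))
        + C + F ∧
    (∑ i ∈ Finset.univ.filter (fun i : Fin 10 => (i : ℕ) < 6), (E₁ i + 2 • E₂ i))
      = 3 • (C + F - ξ) := by
  classical
  -- symmetric counterparts of the hypotheses
  have hE₁F : ∀ i, B (E₁ i) F = 0 := fun i => (hsymm _ _).trans (hFE₁ i)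
  have hE₂F : ∀ i, B (E₂ i) F = 0 := fun i => (hsymm _ _).trans (hFE₂ i)
  have hCF : B C F = 3 := (hsymm _ _).trans hFC
  have hE₂E₁ : ∀ i, B (E₂ i) (E₁ i) = 1 := fun i => (hsymm _ _).trans (hE₁E₂ i)
  have hE₂E₁' : ∀ i j, i ≠ j → B (E₂ i) (E₁ j) = 0 :=
    fun i j h => (hsymm _ _).trans (hE₁E₂' j i h.symm)
  have hE₁C : ∀ i, B (E₁ i) C = 1 := fun i => (hsymm _ _).trans (hCE₁ i)
  have hE₂Clo : ∀ i : Fin 10, (i : ℕ) < 6 → B (E₂ i) C = 0 :=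
    fun i h => (hsymm _ _).trans (hCE₂lo i h)
  have hE₂Chi : ∀ i : Fin 10, 6 ≤ (i : ℕ) → B (E₂ i) C = 1 :=
    fun i h => (hsymm _ _).trans (hCE₂hi i h)
  have hE₁ξ : ∀ i, B (E₁ i) ξ = 1 := fun i => (hsymm _ _).trans (hξE₁ i)
  have hE₂ξ : ∀ i, B (E₂ i) ξ = 1 := fun i => (hsymm _ _).trans (hξE₂ i)
  have hFξ : B F ξ = 3 := (hsymm _ _).trans hξF
  let bb : Module.Basis ((Fin 10 ⊕ Fin 10) ⊕ (Unit ⊕ Unit)) ℚ V := Module.Basis.mk hindep hspan.ge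
  set a : Fin 10 → ℚ := fun i => bb.repr ξ (.inl (.inl i)) with ha
  set bc : Fin 10 → ℚ := fun i => bb.repr ξ (.inl (.inr i)) with hbc
  set c : ℚ := bb.repr ξ (.inr (.inl ())) with hc
  set d : ℚ := bb.repr ξ (.inr (.inr ())) with hd
  have hξ : ξ = (∑ i, a i • E₁ i) + (∑ i, bc i • E₂ i) + c • C + d • F := by
    conv_lhs => rw [← bb.sum_repr ξ]
    simp only [Fintype.sum_sum_type, Fintype.sum_unique]
    simp [bb, Module.Basis.mk_apply, ha, hbc, hc, hd]
    abel
  have expand : ∀ w, B ξ w =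
      (∑ i, a i * B (E₁ i) w) + (∑ i, bc i * B (E₂ i) w) + c * B C w + d * B F w := by
    intro w
    conv_lhs => rw [hξ]
    simp [map_sum, LinearMap.sum_apply, map_smul, LinearMap.smul_apply, smul_eq_mul]
  -- coefficient of C
  have hcval : c = 1 := by
    have h := expand F
    rw [hξF, hFF, hCF] at h
    simp only [hE₁F, hE₂F, mul_zero, Finset.sum_const_zero] at h
    linarith
  -- equations from pairing with E₁ k and E₂ k
  have eq1 : ∀ k, -2 * a k + bc k + c = 1 := by
    intro k
    have h := expand (E₁ k)
    rw [hξE₁ k, hCE₁ k, hFE₁ k] at h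
    rw [Finset.sum_eq_single k
      (fun i _ hik => by rw [hE₁E₁' i k hik, mul_zero]) (by simp)] at h
    rw [Finset.sum_eq_single k
      (fun i _ hik => by rw [hE₂E₁' i k hik, mul_zero]) (by simp)] at h
    rw [hE₁E₁ k, hE₂E₁ k] at h
    linarith
  have eq2 : ∀ k : Fin 10, a k - 2 * bc k + c * (B C (E₂ k)) = 1 := by
    intro k
    have h := expand (E₂ k)
    rw [hξE₂ k, hFE₂ k] at h
    rw [Finset.sum_eq_single k
      (fun i _ hik => by rw [hE₁E₂' i k hik, mul_zero]) (by simp)] at h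
    rw [Finset.sum_eq_single k
      (fun i _ hik => by rw [hE₂E₂' i k hik, mul_zero]) (by simp)] at h
    rw [hE₁E₂ k, hE₂E₂ k] at h
    linarith
  have haval : ∀ k : Fin 10, a k = if (k : ℕ) < 6 then -(1/3) else 0 := by
    intro k
    have h1 := eq1 k
    have h2 := eq2 k
    rw [hcval] at h1 h2
    by_cases hk : (k : ℕ) < 6
    · rw [hCE₂lo k hk] at h2; simp [hk]; linarith
    · rw [hCE₂hi k (le_of_not_gt hk)] at h2; simp [hk]; linarith
  have hbval : ∀ k : Fin 10, bc k = if (k : ℕ) < 6 then -(2/3) else 0 := by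
    intro k
    have h1 := eq1 k
    have h2 := eq2 k
    rw [hcval] at h1 h2
    by_cases hk : (k : ℕ) < 6
    · rw [hCE₂lo k hk] at h2; simp [hk]; linarith
    · rw [hCE₂hi k (le_of_not_gt hk)] at h2; simp [hk]; linarith
  -- value of B ξ C
  have hBξC : B ξ C = -2 + 3 * d := by
    have h := expand C
    rw [hCC, hFC] at h
    have s1 : (∑ i, a i * B (E₁ i) C) = -2 := by
      simp only [hE₁C, mul_one, haval]
      simp [Fin.sum_univ_succ]
      norm_num
    have s2 : (∑ i, bc i * B (E₂ i) C) = 0 := by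
      have : ∀ i : Fin 10, bc i * B (E₂ i) C = 0 := by
        intro i
        by_cases hk : (i : ℕ) < 6
        · rw [hE₂Clo i hk, mul_zero]
        · rw [hbval i, if_neg hk, zero_mul]
      simp [this]
    rw [s1, s2] at h
    linarith
  -- coefficient of F
  have hdval : d = 1 := by
    have h := expand ξ
    rw [hξξ, hFξ, hsymm C ξ, hBξC] at h
    have s1 : (∑ i, a i * B (E₁ i) ξ) = -2 := by
      simp only [hE₁ξ, mul_one, haval]
      simp [Fin.sum_univ_succ]
      norm_num
    have s2 : (∑ i, bc i * B (E₂ i) ξ) = -4 := by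
      simp only [hE₂ξ, mul_one, hbval]
      simp [Fin.sum_univ_succ]
      norm_num
    rw [s1, s2, hcval] at h
    linarith
  have main : ξ = -((1 : ℚ) / 3) •
      (∑ i ∈ Finset.univ.filter (fun i : Fin 10 => (i : ℕ) < 6), (E₁ i + 2 • E₂ i))
      + C + F := by
    rw [hξ, hcval, hdval, Finset.sum_filter, Finset.smul_sum]
    simp only [haval, hbval]
    rw [show ((∑ i : Fin 10, (if (i:ℕ) < 6 then -(1/3 : ℚ) else 0) • E₁ i) +
        (∑ i : Fin 10, (if (i:ℕ) < 6 then -(2/3 : ℚ) else 0) • E₂ i)) =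
        ∑ i : Fin 10, ((if (i:ℕ) < 6 then -(1/3 : ℚ) else 0) • E₁ i +
          (if (i:ℕ) < 6 then -(2/3 : ℚ) else 0) • E₂ i) from
      (Finset.sum_add_distrib).symm]
    have : ∀ i : Fin 10,
        ((if (i:ℕ) < 6 then -(1/3 : ℚ) else 0) • E₁ i +
          (if (i:ℕ) < 6 then -(2/3 : ℚ) else 0) • E₂ i) =
        -((1 : ℚ) / 3) • (if (i:ℕ) < 6 then E₁ i + 2 • E₂ i else 0) := by
      intro i
      by_cases hk : (i : ℕ) < 6
      · simp only [if_pos hk]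
        module
      · simp [hk]
    rw [Finset.sum_congr rfl fun i _ => this i]
    simp only [one_smul]
  refine ⟨main, ?_⟩
  rw [main]
  module
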